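/- Let C and D be categories, F : C → D and G : D → C functors, V a class of morphisms of C and W a class of morphisms of D. Suppose that F sends every morphism of V into W, G sends every morphism of W into V, the composite G∘F is related to the identity functor of C by a finite chain of natural transformations all of whose components lie in V, and F∘G is related to the identity functor of D by a finite chain of natural transformations all of whose components lie in W. Then the localization of C with respect to V exists if and only if the localization of D with respect to W exists, and in that case F and G induce an equivalence of categories C[V⁻¹] ≃ D[W⁻¹]. -/

import Mathlib

/-!
Statement 0: Given functors `F : C ⥤ D`, `G : D ⥤ C`, classes `V`, `W` of morphisms with
`F(V) ⊆ W`, `G(W) ⊆ V`, and chains of natural transformations with components in `V`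
(resp. `W`) relating `G ∘ F` to `𝟭 C` and `F ∘ G` to `𝟭 D`, the localization of `C` at `V`
exists iff the localization of `D` at `W` exists, and `F`, `G` induce an equivalence
`C[V⁻¹] ≃ D[W⁻¹]`.
-/

open CategoryTheory

universe w v₁ v₂ u₁ u₂

/-- Two functors `F G : A ⥤ C` are related by a finite chain of natural transformations
(in either direction) all of whose components lie in the class `V`. -/
inductive ChainInV {A : Type*} [Category A] {C : Type*} [Category C]
    (V : MorphismProperty C) : (A ⥤ C) → (A ⥤ C) → Prop
  | refl (F : A ⥤ C) : ChainInV V F F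
  | forward {F G H : A ⥤ C} (η : F ⟶ G) (hη : ∀ a, V (η.app a)) :
      ChainInV V G H → ChainInV V F H
  | backward {F G H : A ⥤ C} (η : G ⟶ F) (hη : ∀ a, V (η.app a)) :
      ChainInV V G H → ChainInV V F H

lemma ChainInV.iso {A : Type*} [Category A] {C : Type*} [Category C]
    {V : MorphismProperty C} {H K : A ⥤ C} (h : ChainInV V H K)
    {E : Type*} [Category E] (L : C ⥤ E) (hL : V.IsInvertedBy L) :
    Nonempty (H ⋙ L ≅ K ⋙ L) := by
  induction h with
  | refl F => exact ⟨Iso.refl _⟩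
  | forward η hη _ ih =>
      have : ∀ a, IsIso ((Functor.whiskerRight η L).app a) := fun a => hL _ (hη a)
      have : IsIso (Functor.whiskerRight η L) := NatIso.isIso_of_isIso_app _
      exact ⟨asIso (Functor.whiskerRight η L) ≪≫ ih.some⟩
  | backward η hη _ ih =>
      have : ∀ a, IsIso ((Functor.whiskerRight η L).app a) := fun a => hL _ (hη a)
      have : IsIso (Functor.whiskerRight η L) := NatIso.isIso_of_isIso_app _
      exact ⟨(asIso (Functor.whiskerRight η L)).symm ≪≫ ih.some⟩

/-- Transfer of `HasLocalization` along an equivalence of the constructed localized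
categories. -/
lemma hasLocalization_transfer {C : Type u₁} [Category.{v₁} C] {D : Type u₂} [Category.{v₂} D]
    (V : MorphismProperty C) (W : MorphismProperty D)
    (G' : W.Localization ⥤ V.Localization) (F' : V.Localization ⥤ W.Localization)
    (unit : 𝟭 W.Localization ≅ G' ⋙ F') (counit : F' ⋙ G' ≅ 𝟭 V.Localization)
    [MorphismProperty.HasLocalization.{w} V] :
    Nonempty (MorphismProperty.HasLocalization.{w} W) := by
  let eWV : W.Localization ≌ V.Localization := CategoryTheory.Equivalence.mk G' F' unit counit
  let eq : W.Localization ≌ V.Localization' :=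
    eWV.trans (Localization.uniq V.Q V.Q' V)
  let D' := InducedCategory V.Localization' eq.functor.obj
  let ι : D' ⥤ V.Localization' := inducedFunctor _
  let J : W.Localization ⥤ D' :=
    { obj := fun X => X
      map := fun f => InducedCategory.homMk (eq.functor.map f)
      map_id := fun X => InducedCategory.hom_ext (eq.functor.map_id X)
      map_comp := fun f g => InducedCategory.hom_ext (eq.functor.map_comp f g) }
  haveI : ι.EssSurj := ⟨fun Y => ⟨eq.inverse.obj Y, ⟨eq.counitIso.app Y⟩⟩⟩
  haveI : ι.IsEquivalence := {}
  have hJι : J ⋙ ι ≅ eq.functor := NatIso.ofComponents (fun X => Iso.refl _)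
  haveI : (J ⋙ ι).IsEquivalence := Functor.isEquivalence_of_iso hJι.symm
  haveI : J.IsEquivalence := Functor.isEquivalence_of_comp_right J ι
  exact ⟨{ L := W.Q ⋙ J }⟩

theorem localization_equivalence_of_chains
    {C : Type u₁} [Category.{v₁} C] {D : Type u₂} [Category.{v₂} D]
    (F : C ⥤ D) (G : D ⥤ C) (V : MorphismProperty C) (W : MorphismProperty D)
    (hF : ∀ ⦃X Y : C⦄ (f : X ⟶ Y), V f → W (F.map f))
    (hG : ∀ ⦃X Y : D⦄ (f : X ⟶ Y), W f → V (G.map f))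
    (hGF : ChainInV V (F ⋙ G) (𝟭 C))
    (hFG : ChainInV W (G ⋙ F) (𝟭 D)) :
    (Nonempty (MorphismProperty.HasLocalization.{w} V) ↔ Nonempty (MorphismProperty.HasLocalization.{w} W)) ∧
    ∃ (F' : V.Localization ⥤ W.Localization) (G' : W.Localization ⥤ V.Localization),
      Nonempty (V.Q ⋙ F' ≅ F ⋙ W.Q) ∧ Nonempty (W.Q ⋙ G' ≅ G ⋙ V.Q) ∧
      Nonempty (F' ⋙ G' ≅ 𝟭 V.Localization) ∧ Nonempty (G' ⋙ F' ≅ 𝟭 W.Localization) := by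
  have hVinv : V.IsInvertedBy (F ⋙ W.Q) := fun X Y f hf =>
    Localization.inverts W.Q W _ (hF f hf)
  have hWinv : W.IsInvertedBy (G ⋙ V.Q) := fun X Y f hf =>
    Localization.inverts V.Q V _ (hG f hf)
  let F' : V.Localization ⥤ W.Localization := Localization.lift (F ⋙ W.Q) hVinv V.Q
  let G' : W.Localization ⥤ V.Localization := Localization.lift (G ⋙ V.Q) hWinv W.Q
  have eF : V.Q ⋙ F' ≅ F ⋙ W.Q := Localization.fac _ _ _
  have eG : W.Q ⋙ G' ≅ G ⋙ V.Q := Localization.fac _ _ _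
  have eFG : V.Q ⋙ (F' ⋙ G') ≅ V.Q :=
    (Functor.associator _ _ _).symm ≪≫ Functor.isoWhiskerRight eF G' ≪≫ Functor.associator _ _ _
      ≪≫ Functor.isoWhiskerLeft F eG ≪≫ (Functor.associator _ _ _).symm
      ≪≫ (hGF.iso V.Q (Localization.inverts V.Q V)).some ≪≫ Functor.leftUnitor _
  have eGF : W.Q ⋙ (G' ⋙ F') ≅ W.Q :=
    (Functor.associator _ _ _).symm ≪≫ Functor.isoWhiskerRight eG F' ≪≫ Functor.associator _ _ _
      ≪≫ Functor.isoWhiskerLeft G eF ≪≫ (Functor.associator _ _ _).symm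
      ≪≫ (hFG.iso W.Q (Localization.inverts W.Q W)).some ≪≫ Functor.leftUnitor _
  letI : Localization.Lifting V.Q V V.Q (F' ⋙ G') := ⟨eFG⟩
  letI : Localization.Lifting W.Q W W.Q (G' ⋙ F') := ⟨eGF⟩
  have isoFG : F' ⋙ G' ≅ 𝟭 V.Localization :=
    Localization.liftNatIso V.Q V V.Q V.Q (F' ⋙ G') (𝟭 _) (Iso.refl _)
  have isoGF : G' ⋙ F' ≅ 𝟭 W.Localization :=
    Localization.liftNatIso W.Q W W.Q W.Q (G' ⋙ F') (𝟭 _) (Iso.refl _)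
  refine ⟨⟨fun ⟨h⟩ => ?_, fun ⟨h⟩ => ?_⟩, F', G', ⟨eF⟩, ⟨eG⟩, ⟨isoFG⟩, ⟨isoGF⟩⟩
  · exact hasLocalization_transfer V W G' F' isoGF.symm isoFG
  · exact hasLocalization_transfer W V F' G' isoFG.symm isoGF
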